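/- Power iteration on a symmetric positive semidefinite matrix A = JᵀJ: if the top eigenvalue λ₁ of A is strictly larger in absolute value than all others and the initial unit vector v₀ has nonzero component along the top eigenspace, then the normalized iterates vₖ₊₁ = A vₖ / ‖A vₖ‖ satisfy that ‖J vₖ‖ converges to the largest singular value σ_max(J) = √λ₁ as k → ∞. -/

import Mathlib

open Matrix RealInnerProductSpace Filter

theorem power_iteration_tendsto_max_singular_value {m n : ℕ}
    (J : Matrix (Fin m) (Fin n) ℝ) [NeZero n]
    (lam : Fin n → ℝ) (e : Fin n → EuclideanSpace ℝ (Fin n))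
    (he : Orthonormal ℝ e)
    (heig : ∀ i, Matrix.toEuclideanLin (Jᵀ * J) (e i) = lam i • e i)
    (hnonneg : ∀ i, 0 ≤ lam i)
    (htop : ∀ i : Fin n, i ≠ 0 → |lam i| < lam 0)
    (v : ℕ → EuclideanSpace ℝ (Fin n))
    (hv0 : ‖v 0‖ = 1)
    (hcomp : ⟪v 0, e 0⟫ ≠ 0)
    (hne : ∀ k, Matrix.toEuclideanLin (Jᵀ * J) (v k) ≠ 0)
    (hiter : ∀ k, v (k + 1) =
      ‖Matrix.toEuclideanLin (Jᵀ * J) (v k)‖⁻¹ • Matrix.toEuclideanLin (Jᵀ * J) (v k)) :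
    Tendsto (fun k => ‖Matrix.toEuclideanLin J (v k)‖) atTop
      (nhds (Real.sqrt (lam 0))) := by
  classical
  set T := Matrix.toEuclideanLin (Jᵀ * J) with hT
  haveI : Nonempty (Fin n) := ⟨0⟩
  -- quadratic form identity
  have hJT : Jᵀ = Jᴴ := by
    ext i j; simp [Matrix.conjTranspose_apply]
  have hquad : ∀ x : EuclideanSpace ℝ (Fin n),
      ⟪x, T x⟫ = ‖Matrix.toEuclideanLin J x‖ ^ 2 := by
    intro x
    have h1 : T x = Matrix.toEuclideanLin Jᵀ (Matrix.toEuclideanLin J x) := by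
      simp [hT, Matrix.toEuclideanLin_apply, Matrix.mulVec_mulVec]
    rw [h1, hJT, Matrix.toEuclideanLin_conjTranspose_eq_adjoint,
      LinearMap.adjoint_inner_right, real_inner_self_eq_norm_sq]
  -- orthonormal basis
  have hcard : Fintype.card (Fin n) = Module.finrank ℝ (EuclideanSpace ℝ (Fin n)) := by
    simp
  have hspan : ⊤ ≤ Submodule.span ℝ (Set.range e) := by
    have h := (basisOfOrthonormalOfCardEqFinrank he hcard).span_eq
    rw [coe_basisOfOrthonormalOfCardEqFinrank] at h
    exact h.ge
  let b : OrthonormalBasis (Fin n) ℝ (EuclideanSpace ℝ (Fin n)) := OrthonormalBasis.mk he hspan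
  have hb : ⇑b = e := OrthonormalBasis.coe_mk _ _
  set c : Fin n → ℝ := fun i => ⟪e i, v 0⟫ with hc
  set w : ℕ → EuclideanSpace ℝ (Fin n) := fun k => ∑ i, (c i * lam i ^ k) • e i with hw
  have hw0 : w 0 = v 0 := by
    simp only [hw, pow_zero, mul_one]
    calc ∑ i, c i • e i = ∑ i, ⟪b i, v 0⟫ • b i := by rw [hb]
    _ = v 0 := b.sum_repr' (v 0)
  have hTw : ∀ k, T (w k) = w (k + 1) := by
    intro k
    simp only [hw, map_sum, _root_.map_smul, heig]
    refine Finset.sum_congr rfl fun i _ => ?_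
    rw [smul_smul]
    congr 1
    ring
  have key : ∀ k, w k ≠ 0 ∧ v k = ‖w k‖⁻¹ • w k := by
    intro k
    induction k with
    | zero =>
      refine ⟨?_, ?_⟩
      · rw [hw0]; intro h; rw [h] at hv0; simp at hv0
      · rw [hw0, hv0, inv_one, one_smul]
    | succ k ih =>
      obtain ⟨hwk, hvk⟩ := ih
      have hTv : T (v k) = ‖w k‖⁻¹ • w (k + 1) := by
        rw [hvk, _root_.map_smul, hTw]
      have hwk1 : w (k + 1) ≠ 0 := by
        intro h
        exact hne k (by rw [hTv, h, smul_zero])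
      refine ⟨hwk1, ?_⟩
      have hnw : ‖w k‖ ≠ 0 := norm_ne_zero_iff.mpr hwk
      have hnw1 : ‖w (k + 1)‖ ≠ 0 := norm_ne_zero_iff.mpr hwk1
      rw [hiter k, hTv, norm_smul, smul_smul, norm_inv, norm_norm]
      congr 1
      rw [mul_inv, inv_inv]
      field_simp
  -- inner products of the w's
  have hwinner : ∀ k l : ℕ, ⟪w k, w l⟫ = ∑ i, c i ^ 2 * lam i ^ (k + l) := by
    intro k l
    simp only [hw]
    rw [he.inner_sum]
    refine Finset.sum_congr rfl fun i _ => ?_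
    simp only [starRingEnd_apply, star_trivial]
    ring
  have hnormw : ∀ k, ‖w k‖ ^ 2 = ∑ i, c i ^ 2 * lam i ^ (2 * k) := by
    intro k
    rw [← real_inner_self_eq_norm_sq, hwinner]
    simp [two_mul]
  set N : ℕ → ℝ := fun k => ∑ i, c i ^ 2 * lam i ^ (2 * k + 1) with hN
  set D : ℕ → ℝ := fun k => ∑ i, c i ^ 2 * lam i ^ (2 * k) with hD
  have hmain : ∀ k, ‖Matrix.toEuclideanLin J (v k)‖ ^ 2 = N k / D k := by
    intro k
    obtain ⟨hwk, hvk⟩ := key k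
    have hnw : ‖w k‖ ≠ 0 := norm_ne_zero_iff.mpr hwk
    have h1 : k + (k + 1) = 2 * k + 1 := by ring
    rw [← hquad, hvk, real_inner_smul_left, _root_.map_smul, real_inner_smul_right,
      hTw k, hwinner k (k + 1), h1]
    simp only [hN, hD]
    rw [← hnormw k, pow_two, div_eq_mul_inv, mul_inv]
    ring
  -- positivity of lam 0
  have hlam0 : 0 < lam 0 := by
    have h1 : w 1 ≠ 0 := (key 1).1
    have hex : ∃ i, c i * lam i ≠ 0 := by
      by_contra h
      push_neg at h
      apply h1
      simp only [hw, pow_one]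
      exact Finset.sum_eq_zero fun i _ => by rw [h i, zero_smul]
    obtain ⟨i, hi⟩ := hex
    have hli : lam i ≠ 0 := fun h => hi (by rw [h, mul_zero])
    rcases eq_or_ne i 0 with rfl | hi0
    · exact (hnonneg 0).lt_of_ne' hli
    · calc (0:ℝ) < |lam i| := abs_pos.mpr hli
        _ < lam 0 := htop i hi0
  have hc0 : c 0 ≠ 0 := by
    simp only [hc]
    rw [real_inner_comm]
    exact hcomp
  -- the rescaled sums
  set r : Fin n → ℝ := fun i => (lam i / lam 0) ^ 2 with hr
  have hr0 : r 0 = 1 := by simp [hr, div_self hlam0.ne']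
  have hterm : ∀ i : Fin n,
      Tendsto (fun k => r i ^ k) atTop (nhds (if i = 0 then 1 else 0)) := by
    intro i
    rcases eq_or_ne i 0 with rfl | hi
    · simp only [if_pos rfl, hr0, one_pow]
      exact tendsto_const_nhds
    · rw [if_neg hi]
      refine tendsto_pow_atTop_nhds_zero_of_lt_one (sq_nonneg _) ?_
      rw [hr, sq_lt_one_iff_abs_lt_one, abs_div, abs_of_pos hlam0, div_lt_one hlam0]
      exact htop i hi
  set Nt : ℕ → ℝ := fun k => ∑ i, c i ^ 2 * lam i * r i ^ k with hNt
  set Dt : ℕ → ℝ := fun k => ∑ i, c i ^ 2 * r i ^ k with hDt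
  have hNtlim : Tendsto Nt atTop (nhds (c 0 ^ 2 * lam 0)) := by
    have h := tendsto_finset_sum Finset.univ
      (fun i (_ : i ∈ Finset.univ) => (hterm i).const_mul (c i ^ 2 * lam i))
    simpa [mul_ite, mul_one, mul_zero, Finset.sum_ite_eq'] using h
  have hDtlim : Tendsto Dt atTop (nhds (c 0 ^ 2)) := by
    have h := tendsto_finset_sum Finset.univ
      (fun i (_ : i ∈ Finset.univ) => (hterm i).const_mul (c i ^ 2))
    simpa [mul_ite, mul_one, mul_zero, Finset.sum_ite_eq'] using h
  have hfrac : ∀ k, N k / D k = Nt k / Dt k := by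
    intro k
    have hp : lam 0 ^ (2 * k) ≠ 0 := pow_ne_zero _ hlam0.ne'
    have hNk : N k = lam 0 ^ (2 * k) * Nt k := by
      rw [hN, hNt, Finset.mul_sum]
      refine Finset.sum_congr rfl fun i _ => ?_
      rw [hr]
      field_simp
      ring_nf
      rw [inv_pow, mul_assoc _ (lam 0 ^ (k * 2)), mul_inv_cancel₀ (pow_ne_zero _ hlam0.ne'), mul_one]
    have hDk : D k = lam 0 ^ (2 * k) * Dt k := by
      rw [hD, hDt, Finset.mul_sum]
      refine Finset.sum_congr rfl fun i _ => ?_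
      rw [hr]
      field_simp
      ring_nf
      rw [inv_pow, mul_assoc _ (lam 0 ^ (k * 2)), mul_inv_cancel₀ (pow_ne_zero _ hlam0.ne'), mul_one]
    rw [hNk, hDk, mul_div_mul_left _ _ hp]
  have hc02 : c 0 ^ 2 ≠ 0 := pow_ne_zero 2 hc0
  have hlim : Tendsto (fun k => N k / D k) atTop (nhds (lam 0)) := by
    have h := hNtlim.div hDtlim hc02
    have hval : c 0 ^ 2 * lam 0 / c 0 ^ 2 = lam 0 := by field_simp
    rw [hval] at h
    exact h.congr (fun k => (hfrac k).symm)
  have hfin : ∀ k, ‖Matrix.toEuclideanLin J (v k)‖ = Real.sqrt (N k / D k) := by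
    intro k
    rw [← hmain k, Real.sqrt_sq (norm_nonneg _)]
  simp only [hfin]
  exact (Real.continuous_sqrt.tendsto _).comp hlim
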